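/- In the grid-neutral optimal solution of the DAS power allocation problem, if the optimal power of RAU k is zero (p_k* = 0), then every RAU j with γ_j < γ_k has optimal power p_j* = 0. -/

import Mathlib

open Finset

/-- difference bounds for the storage function `S e x = η·max(e−x,0) − max(x−e,0)/η`. -/
lemma Sdiff_bounds (η : ℝ) (hη1 : 0 < η) (hη2 : η < 1) (e a b : ℝ) (hab : a ≤ b) :
    η * (b - a) ≤ (η * max (e - a) 0 - max (a - e) 0 / η)
        - (η * max (e - b) 0 - max (b - e) 0 / η) ∧
    (η * max (e - a) 0 - max (a - e) 0 / η)
        - (η * max (e - b) 0 - max (b - e) 0 / η) ≤ (b - a) / η := by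
  have key : ∀ x : ℝ, max x 0 - max (-x) 0 = x := by
    intro x
    rcases le_total x 0 with h | h
    · rw [max_eq_right h, max_eq_left (by linarith)]; ring
    · rw [max_eq_left h, max_eq_right (by linarith)]; ring
  set u : ℝ := max (e - a) 0 - max (e - b) 0 with hu
  set v : ℝ := max (b - e) 0 - max (a - e) 0 with hv
  have hu0 : 0 ≤ u := by
    have : max (e - b) 0 ≤ max (e - a) 0 := max_le_max (by linarith) le_rfl
    simp only [hu]; linarith
  have hv0 : 0 ≤ v := by
    have : max (a - e) 0 ≤ max (b - e) 0 := max_le_max (by linarith) le_rfl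
    simp only [hv]; linarith
  have huv : u + v = b - a := by
    have h1 := key (e - a)
    have h2 := key (e - b)
    have e1 : max (-(e - a)) 0 = max (a - e) 0 := by ring_nf
    have e2 : max (-(e - b)) 0 = max (b - e) 0 := by ring_nf
    rw [e1] at h1; rw [e2] at h2
    simp only [hu, hv]; linarith
  have hexpr : (η * max (e - a) 0 - max (a - e) 0 / η)
      - (η * max (e - b) 0 - max (b - e) 0 / η) = η * u + v / η := by
    simp only [hu, hv]; field_simp; ring
  rw [hexpr]
  have hη2' : η ^ 2 ≤ 1 := by nlinarith
  constructor
  · have hv2 : η * v ≤ v / η := by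
      rw [le_div_iff₀ hη1]
      nlinarith [mul_nonneg hv0 (sub_nonneg.2 hη2')]
    nlinarith
  · have h1 : η * u ≤ u / η := by
      rw [le_div_iff₀ hη1]
      nlinarith [mul_nonneg hu0 (sub_nonneg.2 hη2')]
    have h2 : (b - a) / η = u / η + v / η := by rw [← huv]; ring
    linarith

lemma sum_split {N : ℕ} (j k : Fin N) (h : j ≠ k) (F : Fin N → ℝ) :
    ∑ i, F i = F j + F k + ∑ i ∈ (univ.erase j).erase k, F i := by
  have hk : k ∈ univ.erase j := by simp [Ne.symm h]
  rw [← Finset.sum_erase_add _ _ (mem_univ j),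
      ← Finset.sum_erase_add _ _ hk]
  ring

/-- the strict objective improvement in the swap argument, isolated
in a small context. -/
lemma key_ineq (γj γk η pj ε d : ℝ) (hγj : 0 < γj) (hγk : 0 < γk)
    (hη1 : 0 < η) (hpj : 0 < pj) (hε0 : 0 < ε) (hεpj : ε ≤ pj)
    (hεγ : ε ≤ γk ^ 2 * η ^ 2 * pj / (2 * γj ^ 2))
    (hd0 : 0 ≤ d) (hdlow : η ^ 2 * ε ≤ d) :
    Real.sqrt pj * γj < Real.sqrt (pj - ε) * γj + Real.sqrt d * γk := by
  set s : ℝ := Real.sqrt pj with hs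
  set t : ℝ := Real.sqrt (pj - ε) with ht
  set r : ℝ := Real.sqrt ε with hr
  have hs0 : 0 < s := Real.sqrt_pos.mpr hpj
  have hs2 : s ^ 2 = pj := Real.sq_sqrt (le_of_lt hpj)
  have ht0 : 0 ≤ t := Real.sqrt_nonneg _
  have ht2 : t ^ 2 = pj - ε := Real.sq_sqrt (by linarith)
  have hr0 : 0 < r := Real.sqrt_pos.mpr hε0
  have hr2 : r ^ 2 = ε := Real.sq_sqrt (le_of_lt hε0)
  have hδr : η * r ≤ Real.sqrt d := by
    have h1 : Real.sqrt (η ^ 2 * ε) ≤ Real.sqrt d := Real.sqrt_le_sqrt hdlow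
    have h2 : Real.sqrt (η ^ 2 * ε) = η * r := by
      rw [Real.sqrt_mul (sq_nonneg η), Real.sqrt_sq (le_of_lt hη1)]
    exact h2 ▸ h1
  have hst : s * (s - t) ≤ ε := by
    have h1 : t * t ≤ t * s := by
      apply mul_le_mul_of_nonneg_left _ ht0
      simp only [hs, ht]
      exact Real.sqrt_le_sqrt (by linarith)
    nlinarith [h1, hs2, ht2]
  have hεlt : γj ^ 2 * ε < γk ^ 2 * η ^ 2 * pj := by
    have h1 : γk ^ 2 * η ^ 2 * pj / (2 * γj ^ 2) < γk ^ 2 * η ^ 2 * pj / γj ^ 2 := by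
      apply div_lt_div_of_pos_left (by positivity) (by positivity) (by nlinarith)
    have h2 : ε < γk ^ 2 * η ^ 2 * pj / γj ^ 2 := lt_of_le_of_lt hεγ h1
    rw [lt_div_iff₀ (by positivity)] at h2
    nlinarith [h2]
  have hmid : γj * ε < γk * η * (r * s) := by
    have hb2 : (γk * η * (r * s)) ^ 2 = γk ^ 2 * η ^ 2 * pj * ε := by
      rw [mul_pow, mul_pow, mul_pow, hr2, hs2]; ring
    have ha2 : (γj * ε) ^ 2 = γj ^ 2 * ε * ε := by ring
    have hsq : (γj * ε) ^ 2 < (γk * η * (r * s)) ^ 2 := by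
      rw [ha2, hb2]
      exact mul_lt_mul_of_pos_right hεlt hε0
    exact lt_of_pow_lt_pow_left₀ 2 (by positivity) hsq
  have h3 : γj * (s - t) * s ≤ γj * ε := by
    calc γj * (s - t) * s = γj * (s * (s - t)) := by ring
      _ ≤ γj * ε := mul_le_mul_of_nonneg_left hst (le_of_lt hγj)
  have h4 : γk * η * r ≤ γk * Real.sqrt d := by
    calc γk * η * r = γk * (η * r) := by ring
      _ ≤ γk * Real.sqrt d := mul_le_mul_of_nonneg_left hδr (le_of_lt hγk)
  have h5 : γj * (s - t) * s < γk * (η * r) * s := by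
    calc γj * (s - t) * s ≤ γj * ε := h3
      _ < γk * η * (r * s) := hmid
      _ = γk * (η * r) * s := by ring
  have h6 : γj * (s - t) < γk * (η * r) := lt_of_mul_lt_mul_right h5 (le_of_lt hs0)
  have hkey : γj * (s - t) < γk * Real.sqrt d := by
    calc γj * (s - t) < γk * (η * r) := h6
      _ = γk * η * r := by ring
      _ ≤ γk * Real.sqrt d := h4
  nlinarith [hkey]

set_option maxHeartbeats 1000000 in
/-- Grid-neutral case: if the optimal power of RAU `k` is zero, then every RAU `j`
with a worse channel gain also has zero optimal power. -/
theorem stmt_6 (N : ℕ) (γ E : Fin N → ℝ) (pmax η : ℝ)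
    (hγ : ∀ i, 0 < γ i) (hγd : ∀ i j : Fin N, i ≠ j → γ i ≠ γ j)
    (hE : ∀ i, 0 < E i) (hpmax : 0 < pmax) (hη1 : 0 < η) (hη2 : η < 1)
    (p : Fin N → ℝ)
    (hfeas : (∀ i, 0 ≤ p i ∧ p i ≤ pmax) ∧
      ∑ i, (η * max (E i - p i) 0 - max (p i - E i) 0 / η) = 0)
    (hopt : ∀ q : Fin N → ℝ,
      (∀ i, 0 ≤ q i ∧ q i ≤ pmax) →
      ∑ i, (η * max (E i - q i) 0 - max (q i - E i) 0 / η) = 0 →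
      (∑ i, Real.sqrt (q i) * γ i) ^ 2 ≤ (∑ i, Real.sqrt (p i) * γ i) ^ 2)
    (k : Fin N) (hk : p k = 0) :
    ∀ j : Fin N, γ j < γ k → p j = 0 := by
  intro j hγjk
  by_contra hne
  have hpj : 0 < p j := lt_of_le_of_ne (hfeas.1 j).1 (Ne.symm hne)
  have hjk : j ≠ k := fun h => absurd hγjk (by rw [h]; exact lt_irrefl _)
  set S : ℝ → ℝ → ℝ := fun e x => η * max (e - x) 0 - max (x - e) 0 / η with hS
  -- choose ε
  set ε : ℝ := min (p j) (min (η ^ 2 * pmax) (γ k ^ 2 * η ^ 2 * p j / (2 * (γ j) ^ 2)))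
    with hεdef
  have hγj := hγ j
  have hγk := hγ k
  have hε0 : 0 < ε := by
    apply lt_min hpj
    apply lt_min <;> positivity
  have hεpj : ε ≤ p j := min_le_left _ _
  have hεpmax : ε ≤ η ^ 2 * pmax := le_trans (min_le_right _ _) (min_le_left _ _)
  have hεγ : ε ≤ γ k ^ 2 * η ^ 2 * p j / (2 * (γ j) ^ 2) :=
    le_trans (min_le_right _ _) (min_le_right _ _)
  -- Δ : increase in stored energy at j when lowering p j by ε
  set Δ : ℝ := S (E j) (p j - ε) - S (E j) (p j) with hΔdef
  have hΔbd := Sdiff_bounds η hη1 hη2 (E j) (p j - ε) (p j) (by linarith)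
  have hΔlow : η * ε ≤ Δ := by
    have := hΔbd.1; simp only [hΔdef, hS]; convert this using 2 <;> ring
  have hΔhigh : Δ ≤ ε / η := by
    have := hΔbd.2; simp only [hΔdef, hS]; convert this using 2 <;> ring
  have hΔ0 : 0 ≤ Δ := le_trans (by positivity) hΔlow
  -- find δ ∈ [0, pmax] with S (E k) δ = S (E k) 0 - Δ by IVT
  have hcont : ContinuousOn (S (E k)) (Set.Icc 0 pmax) := by
    apply Continuous.continuousOn
    simp only [hS]
    fun_prop
  have hkbd := Sdiff_bounds η hη1 hη2 (E k) 0 pmax (le_of_lt hpmax)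
  have hdrop : η * pmax ≤ S (E k) 0 - S (E k) pmax := by
    have := hkbd.1; simp only [hS]; convert this using 2 <;> ring
  have htarget : S (E k) 0 - Δ ∈ Set.Icc (S (E k) pmax) (S (E k) 0) := by
    constructor
    · have h1 : Δ ≤ ε / η := hΔhigh
      have h2 : ε / η ≤ η * pmax := by
        rw [div_le_iff₀ hη1]; linarith [hεpmax]
      linarith
    · linarith
  obtain ⟨δ, hδmem, hδval⟩ := intermediate_value_Icc' (le_of_lt hpmax) hcont htarget
  obtain ⟨hδ0, hδpmax⟩ := hδmem
  -- lower bound for δ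
  have hδbd := Sdiff_bounds η hη1 hη2 (E k) 0 δ hδ0
  have hδlow : η ^ 2 * ε ≤ δ := by
    have h1 : S (E k) 0 - S (E k) δ ≤ (δ - 0) / η := by
      have := hδbd.2; simp only [hS]; convert this using 2 <;> ring
    have h2 : S (E k) 0 - S (E k) δ = Δ := by rw [hδval]; ring
    rw [h2] at h1
    have h3 : η * ε ≤ (δ - 0) / η := le_trans hΔlow h1
    rw [le_div_iff₀ hη1] at h3
    linarith
  -- define the perturbed allocation
  set q : Fin N → ℝ := fun i => if i = k then δ else if i = j then p j - ε else p i
    with hq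
  have hqk : q k = δ := by simp [hq]
  have hqj : q j = p j - ε := by simp [hq, hjk]
  have hqother : ∀ i ∈ (univ.erase j).erase k, q i = p i := by
    intro i hi
    simp only [mem_erase, mem_univ, and_true] at hi
    simp [hq, hi.1, hi.2]
  -- feasibility of q
  have hqfeas : ∀ i, 0 ≤ q i ∧ q i ≤ pmax := by
    intro i
    simp only [hq]
    split_ifs with h1 h2
    · exact ⟨hδ0, hδpmax⟩
    · exact ⟨sub_nonneg.2 hεpj,
        le_trans (sub_le_self _ (le_of_lt hε0)) (hfeas.1 j).2⟩
    · exact hfeas.1 i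
  -- constraint for q
  have hqcon : ∑ i, (η * max (E i - q i) 0 - max (q i - E i) 0 / η) = 0 := by
    have hsplit1 := sum_split j k hjk (fun i => S (E i) (q i))
    have hsplit2 := sum_split j k hjk (fun i => S (E i) (p i))
    have hR : ∑ i ∈ (univ.erase j).erase k, S (E i) (q i)
        = ∑ i ∈ (univ.erase j).erase k, S (E i) (p i) :=
      Finset.sum_congr rfl (fun i hi => by rw [hqother i hi])
    have hcon0 : ∑ i, S (E i) (p i) = 0 := hfeas.2
    rw [hsplit2, hk] at hcon0
    have hgoal : ∑ i, S (E i) (q i) = 0 := by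
      rw [hsplit1, hR, hqj, hqk, hδval, hΔdef]
      linear_combination hcon0
    simpa only [hS] using hgoal
  -- objective comparison
  have hA := sum_split j k hjk (fun i => Real.sqrt (q i) * γ i)
  have hB := sum_split j k hjk (fun i => Real.sqrt (p i) * γ i)
  have hR' : ∑ i ∈ (univ.erase j).erase k, Real.sqrt (q i) * γ i
      = ∑ i ∈ (univ.erase j).erase k, Real.sqrt (p i) * γ i :=
    Finset.sum_congr rfl (fun i hi => by rw [hqother i hi])
  have hkey : Real.sqrt (p j) * γ j
      < Real.sqrt (p j - ε) * γ j + Real.sqrt δ * γ k :=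
    key_ineq (γ j) (γ k) η (p j) ε δ hγj hγk hη1 hpj hε0 hεpj hεγ hδ0 hδlow
  have hBnn : 0 ≤ ∑ i, Real.sqrt (p i) * γ i :=
    Finset.sum_nonneg fun i _ => mul_nonneg (Real.sqrt_nonneg _) (le_of_lt (hγ i))
  have hAB : ∑ i, Real.sqrt (p i) * γ i < ∑ i, Real.sqrt (q i) * γ i := by
    rw [hA, hB, hR', hqj, hqk, hk, Real.sqrt_zero, zero_mul, add_zero]
    exact add_lt_add_of_lt_of_le hkey le_rfl
  have hle := hopt q hqfeas hqcon
  have hlt : (∑ i, Real.sqrt (p i) * γ i) ^ 2 < (∑ i, Real.sqrt (q i) * γ i) ^ 2 :=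
    pow_lt_pow_left₀ hAB hBnn (two_ne_zero)
  exact absurd hle (not_le.2 hlt)
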